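/- In G_N: if N = 2 then the three subgroups H, H_l, H_r coincide and are all equal to ⟨V₀, V₁, V₂⟩; if N ≥ 3 then H, H_l, H_r are pairwise distinct subgroups of G_N. -/

import Mathlib

def cpRels : Set (FreeGroup (Fin 3)) :=
  { FreeGroup.of 0 * FreeGroup.of 1 * (FreeGroup.of 0)⁻¹ *
      ((FreeGroup.of 2) ^ 2 * ((FreeGroup.of 1)⁻¹) ^ 3)⁻¹,
    FreeGroup.of 0 * FreeGroup.of 2 * (FreeGroup.of 0)⁻¹ *
      ((FreeGroup.of 2)⁻¹ * (FreeGroup.of 0) ^ 2)⁻¹,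
    FreeGroup.of 1 * FreeGroup.of 2 * (FreeGroup.of 1)⁻¹ *
      ((FreeGroup.of 2)⁻¹ * (FreeGroup.of 1) ^ 2)⁻¹ }

def cpRelsN (N : ℕ) : Set (FreeGroup (Fin 3)) :=
  cpRels ∪ {(FreeGroup.of 0) ^ (2 * N), (FreeGroup.of 1) ^ (2 * N), (FreeGroup.of 2) ^ N}

/-- The `N`-state chiral Potts group `G_N`. -/
abbrev CPN (N : ℕ) := PresentedGroup (cpRelsN N)

def u₁N (N : ℕ) : CPN N := PresentedGroup.of 0
def u₂N (N : ℕ) : CPN N := PresentedGroup.of 1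
def UN (N : ℕ) : CPN N := PresentedGroup.of 2

def V₀ (N : ℕ) : CPN N := UN N ^ 2 * (u₂N N ^ 2)⁻¹ * (u₁N N ^ 2)⁻¹
def V₁ (N : ℕ) : CPN N := u₁N N ^ 2
def V₂ (N : ℕ) : CPN N := u₂N N ^ 2

def Hsub (N : ℕ) : Subgroup (CPN N) := Subgroup.closure {V₀ N, V₁ N}
def Hl (N : ℕ) : Subgroup (CPN N) := Subgroup.closure {V₀ N, V₂ N}
def Hr (N : ℕ) : Subgroup (CPN N) := Subgroup.closure {V₁ N, V₂ N}

open DihedralGroup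

private lemma dih_inv_r {n : ℕ} (i : ZMod n) : (r i : DihedralGroup n)⁻¹ = r (-i) := rfl
private lemma dih_inv_sr {n : ℕ} (i : ZMod n) : (sr i : DihedralGroup n)⁻¹ = sr i := rfl

private lemma mk_rel_eq_one {rels : Set (FreeGroup (Fin 3))} {w : FreeGroup (Fin 3)}
    (h : w ∈ rels) : PresentedGroup.mk rels w = 1 :=
  (QuotientGroup.eq_one_iff w).mpr (Subgroup.subset_normalClosure h)

/-- the map for the first separating homomorphism -/
private def fA (N : ℕ) : Fin 3 → DihedralGroup N :=
  ![sr 0, sr 1, r 1]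

/-- the map for the second separating homomorphism -/
private def fB (N : ℕ) : Fin 3 → DihedralGroup N :=
  ![sr 0, r 1, r 1]

private lemma sr_pow_two {n : ℕ} (i : ZMod n) : (sr i : DihedralGroup n) ^ 2 = 1 := by
  rw [pow_two, sr_mul_self]

private lemma sr_pow_two_mul {n : ℕ} (i : ZMod n) (N : ℕ) :
    (sr i : DihedralGroup n) ^ (2 * N) = 1 := by
  rw [pow_mul, sr_pow_two, one_pow]

private lemma hA (N : ℕ) : ∀ w ∈ cpRelsN N, FreeGroup.lift (fA N) w = 1 := by
  intro w hw
  rcases hw with hw | hw <;>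
    simp only [cpRels, Set.mem_insert_iff, Set.mem_singleton_iff] at hw <;>
    rcases hw with rfl | rfl | rfl <;>
    simp [fA, map_mul, map_inv, map_pow, pow_two, dih_inv_r, dih_inv_sr,
      sr_mul_sr, sr_mul_r, r_mul_sr, r_mul_r, one_def, sr_pow_two_mul, r_one_pow,
      pow_succ, pow_zero, one_mul, -r_zero] <;>
    first | rfl | (congr 1; ring) | (rw [show ((-1 : ZMod N) + (3 + (-1 + -1))) = 0 by ring])

private lemma hB (N : ℕ) : ∀ w ∈ cpRelsN N, FreeGroup.lift (fB N) w = 1 := by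
  intro w hw
  rcases hw with hw | hw <;>
    simp only [cpRels, Set.mem_insert_iff, Set.mem_singleton_iff] at hw <;>
    rcases hw with rfl | rfl | rfl <;>
    simp [fB, map_mul, map_inv, map_pow, pow_two, dih_inv_r, dih_inv_sr,
      sr_mul_sr, sr_mul_r, r_mul_sr, r_mul_r, one_def, sr_pow_two_mul, r_one_pow,
      pow_succ, pow_zero, one_mul, -r_zero] <;>
    first | rfl | (congr 1; ring) | ring

private def φA (N : ℕ) : CPN N →* DihedralGroup N := PresentedGroup.toGroup (hA N)
private def φB (N : ℕ) : CPN N →* DihedralGroup N := PresentedGroup.toGroup (hB N)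

private lemma φA_V₀ (N : ℕ) : φA N (V₀ N) = r 2 := by
  simp [φA, V₀, UN, u₁N, u₂N, map_mul, map_inv, map_pow, PresentedGroup.toGroup.of, fA,
    pow_two, r_mul_r, sr_mul_sr, dih_inv_r, dih_inv_sr, one_def, -r_zero]
  first | rfl | (congr 1; ring) | ring

private lemma φA_V₁ (N : ℕ) : φA N (V₁ N) = 1 := by
  simp [φA, V₁, u₁N, map_pow, PresentedGroup.toGroup.of, fA, sr_pow_two]

private lemma φA_V₂ (N : ℕ) : φA N (V₂ N) = 1 := by
  simp [φA, V₂, u₂N, map_pow, PresentedGroup.toGroup.of, fA, sr_pow_two]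

private lemma φB_V₀ (N : ℕ) : φB N (V₀ N) = 1 := by
  simp [φB, V₀, UN, u₁N, u₂N, map_mul, map_inv, map_pow, PresentedGroup.toGroup.of, fB,
    pow_two, r_mul_r, sr_mul_sr, dih_inv_r, dih_inv_sr, one_def, -r_zero]

private lemma φB_V₁ (N : ℕ) : φB N (V₁ N) = 1 := by
  simp [φB, V₁, u₁N, map_pow, PresentedGroup.toGroup.of, fB, sr_pow_two]

private lemma φB_V₂ (N : ℕ) : φB N (V₂ N) = r 2 := by
  simp [φB, V₂, u₂N, map_pow, PresentedGroup.toGroup.of, fB, pow_two, r_mul_r]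
  first | rfl | (congr 1; ring) | ring

private lemma r_two_ne_one {N : ℕ} (h3 : 3 ≤ N) : (r 2 : DihedralGroup N) ≠ 1 := by
  rw [one_def]
  intro h
  have h2 : (2 : ZMod N) = 0 := by injection h
  have h2' : ((2 : ℕ) : ZMod N) = 0 := by push_cast; exact h2
  haveI : NeZero N := ⟨by omega⟩
  rw [ZMod.natCast_eq_zero_iff] at h2'
  have := Nat.le_of_dvd (by norm_num) h2'
  omega

/-- If `N = 2` the subgroups `H`, `H_l`, `H_r` of `G_N` coincide and equal
`⟨V₀, V₁, V₂⟩`; if `N ≥ 3` they are pairwise distinct. -/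
theorem H_Hl_Hr (N : ℕ) (hN : 2 ≤ N) :
    (N = 2 → Hsub N = Hl N ∧ Hl N = Hr N ∧
      Hsub N = Subgroup.closure {V₀ N, V₁ N, V₂ N}) ∧
    (3 ≤ N → Hsub N ≠ Hl N ∧ Hsub N ≠ Hr N ∧ Hl N ≠ Hr N) := by
  constructor
  · rintro rfl
    -- In CPN 2 we have U² = 1 hence V₀ = V₂⁻¹ * V₁⁻¹.
    have hU : UN 2 ^ 2 = 1 := by
      have : ((FreeGroup.of 2 : FreeGroup (Fin 3)) ^ 2) ∈ cpRelsN 2 := by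
        right; simp
      have h1 := mk_rel_eq_one this
      simpa [UN, PresentedGroup.of, map_pow] using h1
    have hV₀ : V₀ 2 = (V₂ 2)⁻¹ * (V₁ 2)⁻¹ := by
      rw [V₀, V₁, V₂, hU, one_mul]
    have mem012 : ∀ S : Set (CPN 2), V₀ 2 ∈ Subgroup.closure S → V₁ 2 ∈ Subgroup.closure S →
        V₂ 2 ∈ Subgroup.closure S →
        Subgroup.closure {V₀ 2, V₁ 2, V₂ 2} ≤ Subgroup.closure S := by
      intro S h0 h1 h2
      refine (Subgroup.closure_le _).mpr ?_
      rintro x (rfl | rfl | rfl) <;> assumption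
    have sub3 : ∀ S : Set (CPN 2), S ⊆ {V₀ 2, V₁ 2, V₂ 2} →
        Subgroup.closure S ≤ Subgroup.closure {V₀ 2, V₁ 2, V₂ 2} :=
      fun S hS => Subgroup.closure_mono hS
    have m0 : V₀ 2 ∈ ({V₀ 2, V₁ 2, V₂ 2} : Set (CPN 2)) := Set.mem_insert _ _
    have m1 : V₁ 2 ∈ ({V₀ 2, V₁ 2, V₂ 2} : Set (CPN 2)) :=
      Set.mem_insert_of_mem _ (Set.mem_insert _ _)
    have m2 : V₂ 2 ∈ ({V₀ 2, V₁ 2, V₂ 2} : Set (CPN 2)) :=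
      Set.mem_insert_of_mem _ (Set.mem_insert_of_mem _ rfl)
    have hH : Hsub 2 = Subgroup.closure {V₀ 2, V₁ 2, V₂ 2} := by
      refine le_antisymm (sub3 _ ?_) (mem012 _ ?_ ?_ ?_)
      · rintro x (rfl | rfl)
        exacts [m0, m1]
      · exact Subgroup.subset_closure (Set.mem_insert _ _)
      · exact Subgroup.subset_closure (Set.mem_insert_of_mem _ rfl)
      · have hv : V₂ 2 = (V₀ 2 * V₁ 2)⁻¹ := by rw [hV₀]; group
        rw [hv]
        exact inv_mem (mul_mem (Subgroup.subset_closure (Set.mem_insert _ _))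
          (Subgroup.subset_closure (Set.mem_insert_of_mem _ rfl)))
    have hHl : Hl 2 = Subgroup.closure {V₀ 2, V₁ 2, V₂ 2} := by
      refine le_antisymm (sub3 _ ?_) (mem012 _ ?_ ?_ ?_)
      · rintro x (rfl | rfl)
        exacts [m0, m2]
      · exact Subgroup.subset_closure (Set.mem_insert _ _)
      · have hv : V₁ 2 = (V₂ 2 * V₀ 2)⁻¹ := by rw [hV₀]; group
        rw [hv]
        exact inv_mem (mul_mem (Subgroup.subset_closure (Set.mem_insert_of_mem _ rfl))
          (Subgroup.subset_closure (Set.mem_insert _ _)))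
      · exact Subgroup.subset_closure (Set.mem_insert_of_mem _ rfl)
    have hHr : Hr 2 = Subgroup.closure {V₀ 2, V₁ 2, V₂ 2} := by
      refine le_antisymm (sub3 _ ?_) (mem012 _ ?_ ?_ ?_)
      · rintro x (rfl | rfl)
        exacts [m1, m2]
      · rw [hV₀]
        exact mul_mem (inv_mem (Subgroup.subset_closure (Set.mem_insert_of_mem _ rfl)))
          (inv_mem (Subgroup.subset_closure (Set.mem_insert _ _)))
      · exact Subgroup.subset_closure (Set.mem_insert _ _)
      · exact Subgroup.subset_closure (Set.mem_insert_of_mem _ rfl)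
    exact ⟨hH.trans hHl.symm, hHl.trans hHr.symm, hH⟩
  · intro h3
    have hr2 := r_two_ne_one (N := N) h3
    -- φB kills V₀, V₁ hence Hsub; but φB V₂ = r 2 ≠ 1
    have hBker : ∀ x ∈ Hsub N, φB N x = 1 := by
      intro x hx
      have : Hsub N ≤ (φB N).ker := by
        rw [Hsub]
        apply Subgroup.closure_le _ |>.mpr
        rintro y (rfl | rfl)
        · exact φB_V₀ N
        · exact φB_V₁ N
      exact this hx
    -- φA kills V₁, V₂ hence Hr; but φA V₀ = r 2 ≠ 1
    have hAker : ∀ x ∈ Hr N, φA N x = 1 := by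
      intro x hx
      have : Hr N ≤ (φA N).ker := by
        rw [Hr]
        apply Subgroup.closure_le _ |>.mpr
        rintro y (rfl | rfl)
        · exact φA_V₁ N
        · exact φA_V₂ N
      exact this hx
    refine ⟨?_, ?_, ?_⟩
    · intro h
      have hm : V₂ N ∈ Hsub N := h ▸ Subgroup.subset_closure (Set.mem_insert_of_mem _ rfl)
      exact hr2 (φB_V₂ N ▸ hBker _ hm)
    · intro h
      have hm : V₀ N ∈ Hr N := h ▸ Subgroup.subset_closure (Set.mem_insert _ _)
      exact hr2 (φA_V₀ N ▸ hAker _ hm)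
    · intro h
      have hm : V₀ N ∈ Hr N := h ▸ Subgroup.subset_closure (Set.mem_insert _ _)
      exact hr2 (φA_V₀ N ▸ hAker _ hm)
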